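/- Let M ∈ ℝ^{n×m} with singular value decomposition, and let σ₁ ≥ σ₂ ≥ ... be its singular values. Then max { Tr(UᵀMV) : U ∈ ℝ^{n×c}, V ∈ ℝ^{m×c}, UᵀU + VᵀV = I } = (1/2)(σ₁ + σ₂ + ... + σ_c), attained at U = (√2/2) U_c, V = (√2/2) V_c where U_c, V_c are matrices of the top c left and right singular vectors. -/

import Mathlib

open Matrix

lemma abel_bound (σ s : ℕ → ℝ) (c d : ℕ) (hcd : c ≤ d)
    (hdec : ∀ i j, i ≤ j → σ j ≤ σ i) (hnn : ∀ i, 0 ≤ σ i)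
    (hs0 : ∀ l, 0 ≤ s l) (hs1 : ∀ l, s l ≤ 1/2)
    (hsum : ∑ l ∈ Finset.range d, s l ≤ c / 2) :
    ∑ l ∈ Finset.range d, σ l * s l ≤ (1/2) * ∑ i ∈ Finset.range c, σ i := by
  have hsplit : ∀ g : ℕ → ℝ, ∑ l ∈ Finset.range d, g l
      = ∑ l ∈ Finset.range c, g l + ∑ l ∈ Finset.Ico c d, g l := by
    intro g
    rw [Finset.range_eq_Ico, ← Finset.sum_Ico_consecutive _ (Nat.zero_le c) hcd]
    rw [Finset.range_eq_Ico]
  calc ∑ l ∈ Finset.range d, σ l * s l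
      = ∑ l ∈ Finset.range d, ((σ l - σ c) * s l) + σ c * ∑ l ∈ Finset.range d, s l := by
        rw [Finset.mul_sum, ← Finset.sum_add_distrib]
        exact Finset.sum_congr rfl fun l _ => by ring
    _ ≤ ∑ l ∈ Finset.range c, ((σ l - σ c) * s l) + σ c * (c / 2) := by
        refine add_le_add ?_ (mul_le_mul_of_nonneg_left hsum (hnn c))
        rw [hsplit]
        have h2 : ∑ l ∈ Finset.Ico c d, (σ l - σ c) * s l ≤ 0 := by
          refine Finset.sum_nonpos fun l hl => ?_
          have hl' : c ≤ l := (Finset.mem_Ico.mp hl).1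
          exact mul_nonpos_of_nonpos_of_nonneg (by linarith [hdec c l hl']) (hs0 l)
        linarith
    _ ≤ ∑ l ∈ Finset.range c, ((σ l - σ c) * (1/2)) + σ c * (c / 2) := by
        refine add_le_add (Finset.sum_le_sum fun l hl => ?_) le_rfl
        have : σ c ≤ σ l := hdec l c (le_of_lt (Finset.mem_range.mp hl))
        exact mul_le_mul_of_nonneg_left (hs1 l) (by linarith)
    _ = (1/2) * ∑ i ∈ Finset.range c, σ i := by
        rw [← Finset.sum_mul, Finset.sum_sub_distrib]
        simp [Finset.sum_const, Finset.card_range]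
        ring

lemma upper_bound (n m c : ℕ) (hcn : c ≤ n) (hcm : c ≤ m)
    (σ : ℕ → ℝ) (hσ_dec : ∀ i j, i ≤ j → σ j ≤ σ i) (hσ_nn : ∀ i, 0 ≤ σ i)
    (P : Matrix (Fin n) (Fin c) ℝ) (Q : Matrix (Fin m) (Fin c) ℝ)
    (hPQ : Pᵀ * P + Qᵀ * Q = 1) :
    Matrix.trace (Pᵀ * (Matrix.of fun (i : Fin n) (j : Fin m) =>
        if (i : ℕ) = (j : ℕ) then σ i else 0) * Q)
      ≤ (1/2) * ∑ i ∈ Finset.range c, σ i := by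
  classical
  set d := min n m with hd
  -- entrywise constraint
  have hent : ∀ k l : Fin c,
      (∑ i, P i k * P i l) + (∑ j, Q j k * Q j l) = if k = l then (1:ℝ) else 0 := by
    intro k l
    have := congrFun (congrFun hPQ k) l
    simpa [Matrix.mul_apply, Matrix.one_apply, Matrix.add_apply, Matrix.transpose_apply]
      using this
  -- quadratic form bound
  have hquad : ∀ (x : Fin c → ℝ) (i : Fin n) (j : Fin m),
      (∑ k, P i k * x k)^2 + (∑ k, Q j k * x k)^2 ≤ ∑ k, (x k)^2 := by
    intro x i j
    have e1 : ∀ i' : Fin n, (∑ k, P i' k * x k)^2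
        = ∑ k, ∑ l, x k * x l * (P i' k * P i' l) := by
      intro i'
      rw [sq, Finset.sum_mul_sum]
      exact Finset.sum_congr rfl fun k _ => Finset.sum_congr rfl fun l _ => by ring
    have e2 : ∀ j' : Fin m, (∑ k, Q j' k * x k)^2
        = ∑ k, ∑ l, x k * x l * (Q j' k * Q j' l) := by
      intro j'
      rw [sq, Finset.sum_mul_sum]
      exact Finset.sum_congr rfl fun k _ => Finset.sum_congr rfl fun l _ => by ring
    have expand : (∑ i' : Fin n, (∑ k, P i' k * x k)^2)
        + (∑ j' : Fin m, (∑ k, Q j' k * x k)^2) = ∑ k, (x k)^2 := by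
      have eP : (∑ i' : Fin n, (∑ k, P i' k * x k)^2)
          = ∑ k, ∑ l, x k * x l * (∑ i', P i' k * P i' l) := by
        simp only [e1]
        rw [Finset.sum_comm]
        refine Finset.sum_congr rfl fun k _ => ?_
        rw [Finset.sum_comm]
        exact Finset.sum_congr rfl fun l _ => by rw [Finset.mul_sum]
      have eQ : (∑ j' : Fin m, (∑ k, Q j' k * x k)^2)
          = ∑ k, ∑ l, x k * x l * (∑ j', Q j' k * Q j' l) := by
        simp only [e2]
        rw [Finset.sum_comm]
        refine Finset.sum_congr rfl fun k _ => ?_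
        rw [Finset.sum_comm]
        exact Finset.sum_congr rfl fun l _ => by rw [Finset.mul_sum]
      rw [eP, eQ, ← Finset.sum_add_distrib]
      have hk : ∀ k : Fin c, (∑ l, x k * x l * (∑ i', P i' k * P i' l))
          + (∑ l, x k * x l * (∑ j', Q j' k * Q j' l)) = (x k)^2 := by
        intro k
        rw [← Finset.sum_add_distrib]
        have hl : ∀ l : Fin c, x k * x l * (∑ i', P i' k * P i' l)
            + x k * x l * (∑ j', Q j' k * Q j' l)
            = x k * x l * (if k = l then (1:ℝ) else 0) := by
          intro l; rw [← mul_add, hent k l]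
        rw [Finset.sum_congr rfl fun l _ => hl l]
        simp [mul_ite, Finset.sum_ite_eq, sq]
      rw [Finset.sum_congr rfl fun k _ => hk k]
    calc (∑ k, P i k * x k)^2 + (∑ k, Q j k * x k)^2
        ≤ (∑ i' : Fin n, (∑ k, P i' k * x k)^2) + (∑ j' : Fin m, (∑ k, Q j' k * x k)^2) := by
          refine add_le_add ?_ ?_
          · exact Finset.single_le_sum (f := fun i' : Fin n => (∑ k, P i' k * x k)^2)
              (fun i' _ => sq_nonneg _) (Finset.mem_univ i)
          · exact Finset.single_le_sum (f := fun j' : Fin m => (∑ k, Q j' k * x k)^2)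
              (fun j' _ => sq_nonneg _) (Finset.mem_univ j)
      _ = ∑ k, (x k)^2 := expand
  -- scalar data
  set t : ℕ → ℝ := fun a => if h : a < n ∧ a < m then ∑ k, P ⟨a, h.1⟩ k * Q ⟨a, h.2⟩ k else 0
    with htdef
  set α : ℕ → ℝ := fun a => if h : a < n then ∑ k, (P ⟨a, h⟩ k)^2 else 0 with hαdef
  set β : ℕ → ℝ := fun a => if h : a < m then ∑ k, (Q ⟨a, h⟩ k)^2 else 0 with hβdef
  set s : ℕ → ℝ := fun a => max (t a) 0 with hsdef
  have hα0 : ∀ a, 0 ≤ α a := by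
    intro a; simp only [hαdef]; split
    · exact Finset.sum_nonneg fun k _ => sq_nonneg _
    · exact le_refl 0
  have hβ0 : ∀ a, 0 ≤ β a := by
    intro a; simp only [hβdef]; split
    · exact Finset.sum_nonneg fun k _ => sq_nonneg _
    · exact le_refl 0
  have ht_ab : ∀ a, t a ≤ (α a + β a) / 2 := by
    intro a
    simp only [htdef]
    split
    · rename_i h
      simp only [hαdef, hβdef, dif_pos h.1, dif_pos h.2]
      have hb : ∀ k : Fin c, P ⟨a, h.1⟩ k * Q ⟨a, h.2⟩ k
          ≤ ((P ⟨a, h.1⟩ k)^2 + (Q ⟨a, h.2⟩ k)^2) / 2 := by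
        intro k; nlinarith [sq_nonneg (P ⟨a, h.1⟩ k - Q ⟨a, h.2⟩ k)]
      calc (∑ k, P ⟨a, h.1⟩ k * Q ⟨a, h.2⟩ k)
          ≤ ∑ k, ((P ⟨a, h.1⟩ k)^2 + (Q ⟨a, h.2⟩ k)^2) / 2 := Finset.sum_le_sum fun k _ => hb k
        _ = ((∑ k, (P ⟨a, h.1⟩ k)^2) + ∑ k, (Q ⟨a, h.2⟩ k)^2) / 2 := by
            rw [← Finset.sum_div, Finset.sum_add_distrib]
    · have := hα0 a; have := hβ0 a; linarith
  have ht_half : ∀ a, t a ≤ 1/2 := by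
    intro a
    simp only [htdef]
    split
    · rename_i h
      set i : Fin n := ⟨a, h.1⟩
      set j : Fin m := ⟨a, h.2⟩
      have hq := hquad (fun k => P i k + Q j k) i j
      set A' := ∑ k, (P i k)^2 with hA'
      set B' := ∑ k, (Q j k)^2 with hB'
      set T := ∑ k, P i k * Q j k with hT
      have h1 : (∑ k, P i k * (P i k + Q j k)) = A' + T := by
        rw [hA', hT, ← Finset.sum_add_distrib]
        exact Finset.sum_congr rfl fun k _ => by ring
      have h2 : (∑ k, Q j k * (P i k + Q j k)) = T + B' := by
        rw [hB', hT, ← Finset.sum_add_distrib]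
        exact Finset.sum_congr rfl fun k _ => by ring
      have h3 : (∑ k, (P i k + Q j k)^2) = A' + 2*T + B' := by
        rw [hA', hB', hT, Finset.sum_congr rfl (fun (k : Fin c) _ =>
          (by ring : (P i k + Q j k)^2 = (P i k)^2 + 2*(P i k * Q j k) + (Q j k)^2))]
        rw [Finset.sum_add_distrib, Finset.sum_add_distrib, ← Finset.mul_sum]
      rw [h1, h2, h3] at hq
      have hA0 : 0 ≤ A' := Finset.sum_nonneg fun k _ => sq_nonneg _
      have hB0 : 0 ≤ B' := Finset.sum_nonneg fun k _ => sq_nonneg _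
      have hTab : 2*T ≤ A' + B' := by
        have h4 : (∑ k, 2 * P i k * Q j k) ≤ ∑ k, ((P i k)^2 + (Q j k)^2) :=
          Finset.sum_le_sum (s := Finset.univ)
            (f := fun k : Fin c => 2 * P i k * Q j k)
            (g := fun k : Fin c => (P i k)^2 + (Q j k)^2)
            (fun k _ => two_mul_le_add_sq (P i k) (Q j k))
        rw [Finset.sum_add_distrib] at h4
        rw [hA', hB', hT, Finset.mul_sum]
        calc (∑ k, 2 * (P i k * Q j k)) = ∑ k, 2 * P i k * Q j k :=
              Finset.sum_congr rfl fun k _ => by ring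
          _ ≤ _ := h4
      by_contra h'
      push_neg at h'
      have hS2 : 2 < A' + B' + 2*T := by linarith
      have hSsq : (A' + B' + 2*T)^2 ≤ 2*(A' + B' + 2*T) := by
        nlinarith [sq_nonneg (A' - B'), hq]
      nlinarith [mul_pos (show (0:ℝ) < A' + B' + 2*T by linarith)
        (show (0:ℝ) < A' + B' + 2*T - 2 by linarith)]
    · norm_num
  have hs0 : ∀ a, 0 ≤ s a := fun a => le_max_right _ _
  have hs1 : ∀ a, s a ≤ 1/2 := fun a => max_le (ht_half a) (by norm_num)
  have hs_ab : ∀ a, s a ≤ (α a + β a) / 2 := fun a =>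
    max_le (ht_ab a) (by have := hα0 a; have := hβ0 a; linarith)
  -- trace of PᵀP + QᵀQ
  have htr : (∑ a ∈ Finset.range n, α a) + (∑ a ∈ Finset.range m, β a) = c := by
    have hP : ∑ a ∈ Finset.range n, α a = ∑ i : Fin n, ∑ k, (P i k)^2 := by
      rw [← Fin.sum_univ_eq_sum_range α n]
      refine Finset.sum_congr rfl fun i _ => ?_
      simp only [hαdef, dif_pos i.isLt, Fin.eta]
    have hQ : ∑ a ∈ Finset.range m, β a = ∑ j : Fin m, ∑ k, (Q j k)^2 := by
      rw [← Fin.sum_univ_eq_sum_range β m]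
      refine Finset.sum_congr rfl fun j _ => ?_
      simp only [hβdef, dif_pos j.isLt, Fin.eta]
    have htrP : Matrix.trace (Pᵀ * P) = ∑ i : Fin n, ∑ k, (P i k)^2 := by
      simp only [Matrix.trace, Matrix.diag, Matrix.mul_apply, Matrix.transpose_apply]
      rw [Finset.sum_comm]
      exact Finset.sum_congr rfl fun i _ => Finset.sum_congr rfl fun k _ => (sq (P i k)).symm
    have htrQ : Matrix.trace (Qᵀ * Q) = ∑ j : Fin m, ∑ k, (Q j k)^2 := by
      simp only [Matrix.trace, Matrix.diag, Matrix.mul_apply, Matrix.transpose_apply]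
      rw [Finset.sum_comm]
      exact Finset.sum_congr rfl fun j _ => Finset.sum_congr rfl fun k _ => (sq (Q j k)).symm
    rw [hP, hQ, ← htrP, ← htrQ, ← Matrix.trace_add, hPQ]
    simp [Matrix.trace_one]
  -- trace as a sum
  set G : ℕ → ℕ → ℝ := fun a b => if a = b then σ b * t b else 0 with hGdef
  have htrace : Matrix.trace (Pᵀ * (Matrix.of fun (i : Fin n) (j : Fin m) =>
        if (i : ℕ) = (j : ℕ) then σ i else 0) * Q)
      = ∑ a ∈ Finset.range d, σ a * t a := by
    have hg : ∀ (i : Fin n) (j : Fin m),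
        (if (i : ℕ) = (j : ℕ) then σ (i : ℕ) else 0) * (∑ k, P i k * Q j k) = G ↑i ↑j := by
      intro i j
      by_cases hij : (i : ℕ) = (j : ℕ)
      · simp only [hGdef, if_pos hij]
        have h : (i : ℕ) < n ∧ (i : ℕ) < m := ⟨i.isLt, hij ▸ j.isLt⟩
        have e2 : (⟨(i : ℕ), h.2⟩ : Fin m) = j := Fin.ext hij
        have ht' : t ↑i = ∑ k, P i k * Q j k := by
          simp only [htdef]
          rw [dif_pos h]
          refine Finset.sum_congr rfl fun k _ => ?_
          rw [show (⟨(i : ℕ), h.1⟩ : Fin n) = i from Fin.eta i h.1, e2]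
        rw [← hij, ht']
      · simp only [hGdef, if_neg hij, zero_mul]
    calc Matrix.trace (Pᵀ * (Matrix.of fun (i : Fin n) (j : Fin m) =>
          if (i : ℕ) = (j : ℕ) then σ i else 0) * Q)
        = ∑ k : Fin c, ∑ j : Fin m, (∑ i : Fin n, P i k *
            (if (i : ℕ) = (j : ℕ) then σ (i:ℕ) else 0)) * Q j k := by
          simp only [Matrix.trace, Matrix.diag, Matrix.mul_apply, Matrix.transpose_apply,
            Matrix.of_apply]
      _ = ∑ k : Fin c, ∑ j : Fin m, ∑ i : Fin n,
            P i k * (if (i : ℕ) = (j : ℕ) then σ (i:ℕ) else 0) * Q j k := by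
          exact Finset.sum_congr rfl fun k _ => Finset.sum_congr rfl fun j _ =>
            Finset.sum_mul _ _ _
      _ = ∑ k : Fin c, ∑ i : Fin n, ∑ j : Fin m,
            P i k * (if (i : ℕ) = (j : ℕ) then σ (i:ℕ) else 0) * Q j k := by
          exact Finset.sum_congr rfl fun k _ => Finset.sum_comm
      _ = ∑ i : Fin n, ∑ k : Fin c, ∑ j : Fin m,
            P i k * (if (i : ℕ) = (j : ℕ) then σ (i:ℕ) else 0) * Q j k := Finset.sum_comm
      _ = ∑ i : Fin n, ∑ j : Fin m, ∑ k : Fin c,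
            P i k * (if (i : ℕ) = (j : ℕ) then σ (i:ℕ) else 0) * Q j k := by
          exact Finset.sum_congr rfl fun i _ => Finset.sum_comm
      _ = ∑ i : Fin n, ∑ j : Fin m,
            (if (i : ℕ) = (j : ℕ) then σ (i:ℕ) else 0) * (∑ k, P i k * Q j k) := by
          refine Finset.sum_congr rfl fun i _ => Finset.sum_congr rfl fun j _ => ?_
          rw [Finset.mul_sum]
          exact Finset.sum_congr rfl fun k _ => by ring
      _ = ∑ i : Fin n, ∑ j : Fin m, G ↑i ↑j := by
          exact Finset.sum_congr rfl fun i _ => Finset.sum_congr rfl fun j _ => hg i j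
      _ = ∑ i : Fin n, ∑ b ∈ Finset.range m, G ↑i b := by
          exact Finset.sum_congr rfl fun i _ => Fin.sum_univ_eq_sum_range (G ↑i) m
      _ = ∑ a ∈ Finset.range n, ∑ b ∈ Finset.range m, G a b :=
          Fin.sum_univ_eq_sum_range (fun a => ∑ b ∈ Finset.range m, G a b) n
      _ = ∑ a ∈ Finset.range n, (if a ∈ Finset.range m then σ a * t a else 0) := by
          refine Finset.sum_congr rfl fun a _ => ?_
          simp only [hGdef]
          exact Finset.sum_ite_eq (Finset.range m) a (fun b => σ b * t b)
      _ = ∑ a ∈ Finset.range n ∩ Finset.range m, σ a * t a :=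
          Finset.sum_ite_mem (Finset.range n) (Finset.range m) (fun a => σ a * t a)
      _ = ∑ a ∈ Finset.range d, σ a * t a := by
          congr 1
          ext x; simp [hd, Nat.lt_min]
  rw [htrace]
  -- final chain
  have hsum' : ∑ a ∈ Finset.range d, s a ≤ c / 2 := by
    calc ∑ a ∈ Finset.range d, s a
        ≤ ∑ a ∈ Finset.range d, (α a + β a) / 2 := Finset.sum_le_sum fun a _ => hs_ab a
      _ = ((∑ a ∈ Finset.range d, α a) + ∑ a ∈ Finset.range d, β a) / 2 := by
          rw [← Finset.sum_div, Finset.sum_add_distrib]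
      _ ≤ ((∑ a ∈ Finset.range n, α a) + ∑ a ∈ Finset.range m, β a) / 2 := by
          have h1 : ∑ a ∈ Finset.range d, α a ≤ ∑ a ∈ Finset.range n, α a :=
            Finset.sum_le_sum_of_subset_of_nonneg
              (Finset.range_subset_range.mpr (min_le_left n m)) (fun a _ _ => hα0 a)
          have h2 : ∑ a ∈ Finset.range d, β a ≤ ∑ a ∈ Finset.range m, β a :=
            Finset.sum_le_sum_of_subset_of_nonneg
              (Finset.range_subset_range.mpr (min_le_right n m)) (fun a _ _ => hβ0 a)
          linarith
      _ = c / 2 := by rw [htr]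
  calc ∑ a ∈ Finset.range d, σ a * t a
      ≤ ∑ a ∈ Finset.range d, σ a * s a :=
        Finset.sum_le_sum fun a _ => mul_le_mul_of_nonneg_left (le_max_left _ _) (hσ_nn a)
    _ ≤ (1/2) * ∑ i ∈ Finset.range c, σ i :=
        abel_bound σ s c d (le_min hcn hcm) hσ_dec hσ_nn hs0 hs1 hsum'

/-- Ky Fan-type result: the maximum of `Tr(UᵀMV)` subject to `UᵀU + VᵀV = I` is half
the sum of the top `c` singular values, attained at `(√2/2)·U_c, (√2/2)·V_c`. -/
theorem stmt_8 (n m c : ℕ) (hcn : c ≤ n) (hcm : c ≤ m)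
    (M : Matrix (Fin n) (Fin m) ℝ)
    (σ : ℕ → ℝ) (hσ_dec : ∀ i j, i ≤ j → σ j ≤ σ i) (hσ_nn : ∀ i, 0 ≤ σ i)
    (U0 : Matrix (Fin n) (Fin n) ℝ) (V0 : Matrix (Fin m) (Fin m) ℝ)
    (hU0 : U0ᵀ * U0 = 1) (hV0 : V0ᵀ * V0 = 1)
    (hSVD : M = U0 * (Matrix.of fun (i : Fin n) (j : Fin m) =>
        if (i : ℕ) = (j : ℕ) then σ i else 0) * V0ᵀ) :
    IsGreatest
      {t : ℝ | ∃ (U : Matrix (Fin n) (Fin c) ℝ) (V : Matrix (Fin m) (Fin c) ℝ),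
          Uᵀ * U + Vᵀ * V = 1 ∧ t = Matrix.trace (Uᵀ * M * V)}
      ((1 / 2) * ∑ i ∈ Finset.range c, σ i) ∧
    (((Real.sqrt 2 / 2) • U0.submatrix id (Fin.castLE hcn))ᵀ
        * ((Real.sqrt 2 / 2) • U0.submatrix id (Fin.castLE hcn))
      + ((Real.sqrt 2 / 2) • V0.submatrix id (Fin.castLE hcm))ᵀ
        * ((Real.sqrt 2 / 2) • V0.submatrix id (Fin.castLE hcm)) = 1 ∧
     Matrix.trace (((Real.sqrt 2 / 2) • U0.submatrix id (Fin.castLE hcn))ᵀ * M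
        * ((Real.sqrt 2 / 2) • V0.submatrix id (Fin.castLE hcm)))
       = (1 / 2) * ∑ i ∈ Finset.range c, σ i) := by
  classical
  set S : Matrix (Fin n) (Fin m) ℝ := Matrix.of fun (i : Fin n) (j : Fin m) =>
      if (i : ℕ) = (j : ℕ) then σ i else 0 with hS
  have hU0' : U0 * U0ᵀ = 1 := mul_eq_one_comm.mp hU0
  have hV0' : V0 * V0ᵀ = 1 := mul_eq_one_comm.mp hV0
  set r : ℝ := Real.sqrt 2 / 2 with hr
  have hr2 : r * r = 1/2 := by
    rw [hr, div_mul_div_comm, Real.mul_self_sqrt (by norm_num : (2:ℝ) ≥ 0)]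
    norm_num
  set A : Matrix (Fin n) (Fin c) ℝ := U0.submatrix id (Fin.castLE hcn) with hA
  set B : Matrix (Fin m) (Fin c) ℝ := V0.submatrix id (Fin.castLE hcm) with hB
  -- constraint for the witness
  have hAA : Aᵀ * A = 1 := by
    ext k l
    have h1 := congrFun (congrFun hU0 (Fin.castLE hcn k)) (Fin.castLE hcn l)
    simp only [Matrix.mul_apply, Matrix.transpose_apply, Matrix.one_apply] at h1 ⊢
    simp only [hA, Matrix.submatrix_apply, id_eq]
    rw [h1]
    simp [Fin.castLE_inj]
  have hBB : Bᵀ * B = 1 := by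
    ext k l
    have h1 := congrFun (congrFun hV0 (Fin.castLE hcm k)) (Fin.castLE hcm l)
    simp only [Matrix.mul_apply, Matrix.transpose_apply, Matrix.one_apply] at h1 ⊢
    simp only [hB, Matrix.submatrix_apply, id_eq]
    rw [h1]
    simp [Fin.castLE_inj]
  have hconstraint : (r • A)ᵀ * (r • A) + (r • B)ᵀ * (r • B) = 1 := by
    rw [Matrix.transpose_smul, Matrix.transpose_smul, Matrix.smul_mul, Matrix.smul_mul,
      Matrix.mul_smul, Matrix.mul_smul, hAA, hBB]
    ext k l
    simp only [Matrix.add_apply, Matrix.smul_apply, smul_eq_mul, Matrix.one_apply]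
    split_ifs
    · nlinarith [hr2]
    · ring
  -- trace at the witness
  have hAU0 : Aᵀ * U0 = (1 : Matrix (Fin n) (Fin n) ℝ).submatrix (Fin.castLE hcn) id := by
    rw [← hU0]
    ext k i
    simp [Matrix.mul_apply, hA, Matrix.submatrix_apply]
  have hV0B : V0ᵀ * B = (1 : Matrix (Fin m) (Fin m) ℝ).submatrix id (Fin.castLE hcm) := by
    rw [← hV0]
    ext j k
    simp [Matrix.mul_apply, hB, Matrix.submatrix_apply]
  have htraceAB : Matrix.trace (Aᵀ * M * B) = ∑ i ∈ Finset.range c, σ i := by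
    have e : Aᵀ * M * B = (Aᵀ * U0) * S * (V0ᵀ * B) := by
      rw [hSVD]
      simp only [Matrix.mul_assoc]
    rw [e, hAU0, hV0B]
    have : ((1 : Matrix (Fin n) (Fin n) ℝ).submatrix (Fin.castLE hcn) id * S *
        (1 : Matrix (Fin m) (Fin m) ℝ).submatrix id (Fin.castLE hcm))
        = S.submatrix (Fin.castLE hcn) (Fin.castLE hcm) := by
      ext k l
      simp [Matrix.mul_apply, Matrix.one_apply, Matrix.submatrix_apply, Finset.sum_ite_eq,
        Finset.sum_ite_eq']
    rw [this]
    simp only [Matrix.trace, Matrix.diag, Matrix.submatrix_apply, hS, Matrix.of_apply,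
      Fin.coe_castLE, if_pos rfl]
    exact Fin.sum_univ_eq_sum_range (fun a => σ a) c
  have htracewit : Matrix.trace ((r • A)ᵀ * M * (r • B))
      = (1 / 2) * ∑ i ∈ Finset.range c, σ i := by
    rw [Matrix.transpose_smul, Matrix.smul_mul, Matrix.smul_mul, Matrix.mul_smul,
      Matrix.trace_smul, Matrix.trace_smul, smul_smul, hr2, htraceAB]
    simp
  refine ⟨⟨⟨r • A, r • B, hconstraint, htracewit.symm⟩, ?_⟩, hconstraint, htracewit⟩
  rintro x ⟨U, V, hUV, rfl⟩
  set P : Matrix (Fin n) (Fin c) ℝ := U0ᵀ * U with hP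
  set Q : Matrix (Fin m) (Fin c) ℝ := V0ᵀ * V with hQ
  have hPQ : Pᵀ * P + Qᵀ * Q = 1 := by
    rw [← hUV, hP, hQ]
    congr 1
    · rw [Matrix.transpose_mul, Matrix.transpose_transpose, Matrix.mul_assoc,
        ← Matrix.mul_assoc U0, hU0', Matrix.one_mul]
    · rw [Matrix.transpose_mul, Matrix.transpose_transpose, Matrix.mul_assoc,
        ← Matrix.mul_assoc V0, hV0', Matrix.one_mul]
  have hrw : Uᵀ * M * V = Pᵀ * S * Q := by
    rw [hSVD, hP, hQ, Matrix.transpose_mul, Matrix.transpose_transpose]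
    simp only [Matrix.mul_assoc]
  rw [hrw]
  exact upper_bound n m c hcn hcm σ hσ_dec hσ_nn P Q hPQ
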